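/- For any Φ ∈ C(I, K(ℝ)) and its α-countable fractal function Φ^α, the uniform error satisfies ‖Φ^α − Φ‖_∞ ≤ (|α|/(1−|α|)) ‖Φ − B‖_∞ + (2|α|/(1−|α|)) ‖Φ‖_∞, where ‖U − V‖_∞ = sup_{t∈I} H_d(U(t), V(t)) and ‖Φ‖_∞ = sup_{t∈I} H_d(Φ(t), {0}). -/

import Mathlib

open Set Metric Pointwise TopologicalSpace Filter Topology

lemma my_step {A B C D : Set ℝ} (hB : B.Nonempty) (hD : D.Nonempty)
    (kB : IsCompact B) (kD : IsCompact D)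
    (finAB : EMetric.hausdorffEdist A B ≠ ⊤) (finCD : EMetric.hausdorffEdist C D ≠ ⊤) :
    ∀ x ∈ A + C, ∃ y ∈ B + D, dist x y ≤ hausdorffDist A B + hausdorffDist C D := by
  rintro x ⟨a, ha, c, hc, rfl⟩
  obtain ⟨b, hb, hab⟩ := kB.exists_infDist_eq_dist hB a
  obtain ⟨d, hd, hcd⟩ := kD.exists_infDist_eq_dist hD c
  refine ⟨b + d, add_mem_add hb hd, ?_⟩
  calc dist (a + c) (b + d) ≤ dist a b + dist c d := dist_add_add_le a c b d
    _ ≤ hausdorffDist A B + hausdorffDist C D := by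
        rw [← hab, ← hcd]
        exact add_le_add (infDist_le_hausdorffDist_of_mem ha finAB)
          (infDist_le_hausdorffDist_of_mem hc finCD)

lemma my_haus_add {A B C D : Set ℝ} (hA : A.Nonempty) (hB : B.Nonempty)
    (hC : C.Nonempty) (hD : D.Nonempty)
    (kA : IsCompact A) (kB : IsCompact B) (kC : IsCompact C) (kD : IsCompact D) :
    hausdorffDist (A + C) (B + D) ≤ hausdorffDist A B + hausdorffDist C D := by
  have finAB : EMetric.hausdorffEdist A B ≠ ⊤ :=
    hausdorffEdist_ne_top_of_nonempty_of_bounded hA hB kA.isBounded kB.isBounded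
  have finCD : EMetric.hausdorffEdist C D ≠ ⊤ :=
    hausdorffEdist_ne_top_of_nonempty_of_bounded hC hD kC.isBounded kD.isBounded
  refine hausdorffDist_le_of_mem_dist
    (add_nonneg hausdorffDist_nonneg hausdorffDist_nonneg)
    (my_step hB hD kB kD finAB finCD) ?_
  intro y hy
  obtain ⟨x, hx, hxy⟩ := my_step hA hC kA kC
    (fun h => finAB (by rw [← h]; exact EMetric.hausdorffEdist_comm)) (fun h => finCD (by rw [← h]; exact EMetric.hausdorffEdist_comm)) y hy
  exact ⟨x, hx, by rwa [hausdorffDist_comm (s := A) (t := B), hausdorffDist_comm (s := C) (t := D)]⟩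

lemma my_haus_smul (α : ℝ) {A B : Set ℝ} (hA : A.Nonempty) (hB : B.Nonempty)
    (kA : IsCompact A) (kB : IsCompact B) :
    hausdorffDist (α • A) (α • B) ≤ |α| * hausdorffDist A B := by
  have finAB : EMetric.hausdorffEdist A B ≠ ⊤ :=
    hausdorffEdist_ne_top_of_nonempty_of_bounded hA hB kA.isBounded kB.isBounded
  have key : ∀ (S T : Set ℝ), T.Nonempty → IsCompact T → EMetric.hausdorffEdist S T ≠ ⊤ →
      ∀ x ∈ α • S, ∃ y ∈ α • T, dist x y ≤ |α| * hausdorffDist S T := by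
    rintro S T hT kT fin x ⟨s, hs, rfl⟩
    obtain ⟨t, ht, hst⟩ := kT.exists_infDist_eq_dist hT s
    refine ⟨α • t, smul_mem_smul_set ht, ?_⟩
    rw [dist_smul₀, Real.norm_eq_abs]
    exact mul_le_mul_of_nonneg_left
      (hst ▸ infDist_le_hausdorffDist_of_mem hs fin) (abs_nonneg α)
  refine hausdorffDist_le_of_mem_dist
    (mul_nonneg (abs_nonneg α) hausdorffDist_nonneg)
    (key A B hB kB finAB) ?_
  intro y hy
  obtain ⟨x, hx, hxy⟩ := key B A hA kA (fun h => finAB (by rw [← h]; exact EMetric.hausdorffEdist_comm)) y hy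
  exact ⟨x, hx, by rwa [hausdorffDist_comm (s := A) (t := B)]⟩

lemma my_haus_neg (A : Set ℝ) : hausdorffDist (-A) {0} = hausdorffDist A {0} := by
  have hiso : Isometry (fun x : ℝ => -x) := Isometry.of_dist_eq fun a b => dist_neg_neg a b
  have := hausdorffDist_image (s := A) (t := {0}) hiso
  simpa [Set.image_neg_eq_neg, Set.neg_singleton] using this

theorem stmt_8
    (a T : ℝ) (haT : a < T)
    (p : ℕ → ℝ) (hp : StrictMono p) (hpa : p 0 = a)
    (hpT : Tendsto p atTop (nhds T))
    (ζ ξ : ℕ → ℝ → ℝ) (c : ℕ → ℝ) (hc : ∀ n, c n < 1)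
    (hζlip : ∀ n, ∀ x ∈ Icc a T, ∀ y ∈ Icc a T, |ζ n x - ζ n y| ≤ c n * |x - y|)
    (hζcont : ∀ n, ContinuousOn (ζ n) (Icc a T))
    (hζinj : ∀ n, InjOn (ζ n) (Icc a T))
    (hζim : ∀ n, ζ n '' Icc a T = Icc (p n) (p (n + 1)))
    (hζend : ∀ n, (ζ n a = p n ∧ ζ n T = p (n + 1)) ∨ (ζ n a = p (n + 1) ∧ ζ n T = p n))
    (hξ : ∀ n, ∀ y ∈ Icc (p n) (p (n + 1)), ξ n y ∈ Icc a T ∧ ζ n (ξ n y) = y)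
    (α : ℝ) (hα : |α| < 1)
    (Φ B Φα : ℝ → NonemptyCompacts ℝ)
    (hΦ : ContinuousOn Φ (Icc a T)) (hB : ContinuousOn B (Icc a T))
    (hΦα : ContinuousOn Φα (Icc a T))
    (hΦαeq : ∀ n, ∀ t ∈ Icc (p n) (p (n + 1)),
      (Φα t : Set ℝ) = (Φ t : Set ℝ) + α • ((Φα (ξ n t) : Set ℝ) - (B (ξ n t) : Set ℝ))) :
    ⨆ t : ↥(Icc a T), dist (Φα ↑t) (Φ ↑t) ≤
      (|α| / (1 - |α|)) * (⨆ t : ↥(Icc a T), dist (Φ ↑t) (B ↑t)) +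
      (2 * |α| / (1 - |α|)) * ⨆ t : ↥(Icc a T), Metric.hausdorffDist (Φ ↑t : Set ℝ) {0} := by
  have haI : a ∈ Icc a T := ⟨le_refl a, le_of_lt haT⟩
  haveI : Nonempty ↥(Icc a T) := ⟨⟨a, haI⟩⟩
  set Z : NonemptyCompacts ℝ := ⟨⟨{0}, isCompact_singleton⟩, Set.singleton_nonempty 0⟩ with hZ
  have hZcoe : (Z : Set ℝ) = {0} := rfl
  set E := ⨆ t : ↥(Icc a T), dist (Φα ↑t) (Φ ↑t) with hE
  set F := ⨆ t : ↥(Icc a T), dist (Φ ↑t) (B ↑t) with hF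
  set G := ⨆ t : ↥(Icc a T), Metric.hausdorffDist (Φ ↑t : Set ℝ) {0} with hG
  -- boundedness of the three suprema
  have cΦα : Continuous fun t : ↥(Icc a T) => Φα ↑t := hΦα.restrict
  have cΦ : Continuous fun t : ↥(Icc a T) => Φ ↑t := hΦ.restrict
  have cB : Continuous fun t : ↥(Icc a T) => B ↑t := hB.restrict
  have bE : BddAbove (range fun t : ↥(Icc a T) => dist (Φα ↑t) (Φ ↑t)) :=
    (isCompact_range (cΦα.dist cΦ)).bddAbove
  have bF : BddAbove (range fun t : ↥(Icc a T) => dist (Φ ↑t) (B ↑t)) :=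
    (isCompact_range (cΦ.dist cB)).bddAbove
  have hGd : ∀ t : ℝ, Metric.hausdorffDist (Φ t : Set ℝ) {0} = dist (Φ t) Z := fun t => rfl
  have bG : BddAbove (range fun t : ↥(Icc a T) => Metric.hausdorffDist (Φ ↑t : Set ℝ) {0}) := by
    simp only [hGd]
    exact (isCompact_range (cΦ.dist continuous_const)).bddAbove
  -- the key pointwise bound
  set K := |α| * (E + F + 2 * G) with hK
  have key : ∀ t ∈ Ico a T, dist (Φα t) (Φ t) ≤ K := by
    intro t ht
    have hex : ∃ n, t < p n := (hpT.eventually (eventually_gt_nhds ht.2)).exists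
    obtain ⟨m, hm⟩ : ∃ m, t ∈ Icc (p m) (p (m + 1)) := by
      have hn := Nat.find_spec hex
      have hn0 : Nat.find hex ≠ 0 := by
        intro h0
        rw [h0, hpa] at hn
        exact absurd ht.1 (not_le.mpr hn)
      obtain ⟨m, hm⟩ := Nat.exists_eq_succ_of_ne_zero hn0
      refine ⟨m, ?_, ?_⟩
      · have := Nat.find_min hex (m := m) (by omega)
        exact not_lt.mp this
      · rw [hm] at hn; exact le_of_lt hn
    have hsI : ξ m t ∈ Icc a T := (hξ m t hm).1
    set s := ξ m t with hs
    have heq := hΦαeq m t hm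
    -- names for the sets
    set A : Set ℝ := (Φ t : Set ℝ)
    set P : Set ℝ := (Φα s : Set ℝ)
    set Q : Set ℝ := (B s : Set ℝ)
    have kA : IsCompact A := (Φ t).isCompact
    have nA : A.Nonempty := (Φ t).nonempty
    have kP : IsCompact P := (Φα s).isCompact
    have nP : P.Nonempty := (Φα s).nonempty
    have kQ : IsCompact Q := (B s).isCompact
    have nQ : Q.Nonempty := (B s).nonempty
    have knQ : IsCompact (-Q) := by rw [← Set.image_neg_eq_neg]; exact kQ.image continuous_neg
    have nnQ : (-Q).Nonempty := nQ.neg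
    have hsub : P - Q = P + (-Q) := sub_eq_add_neg P Q
    have kX : IsCompact (P - Q) := by rw [hsub]; exact kP.add knQ
    have nX : (P - Q).Nonempty := by rw [hsub]; exact nP.add nnQ
    have kaX : IsCompact (α • (P - Q)) := kX.smul α
    have naX : (α • (P - Q)).Nonempty := nX.smul_set
    have n0 : ({0} : Set ℝ).Nonempty := Set.singleton_nonempty 0
    have k0 : IsCompact ({0} : Set ℝ) := isCompact_singleton
    -- step 1 : H(A + α•X , A) ≤ H(α•X, {0})
    have step1 : hausdorffDist (A + α • (P - Q)) A ≤ hausdorffDist (α • (P - Q)) ({0} : Set ℝ) := by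
      have h1 : A + ({0} : Set ℝ) = A := by simp
      calc hausdorffDist (A + α • (P - Q)) A
          = hausdorffDist (A + α • (P - Q)) (A + ({0} : Set ℝ)) := by rw [h1]
        _ ≤ hausdorffDist A A + hausdorffDist (α • (P - Q)) ({0} : Set ℝ) :=
            my_haus_add nA nA naX n0 kA kA kaX k0
        _ = hausdorffDist (α • (P - Q)) ({0} : Set ℝ) := by
            rw [hausdorffDist_self_zero, zero_add]
    -- step 2 : H(α•X, {0}) ≤ |α| * H(X, {0})
    have step2 : hausdorffDist (α • (P - Q)) ({0} : Set ℝ)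
        ≤ |α| * hausdorffDist (P - Q) ({0} : Set ℝ) := by
      have h0 : α • ({0} : Set ℝ) = {0} := by simp
      calc hausdorffDist (α • (P - Q)) ({0} : Set ℝ)
          = hausdorffDist (α • (P - Q)) (α • ({0} : Set ℝ)) := by rw [h0]
        _ ≤ |α| * hausdorffDist (P - Q) ({0} : Set ℝ) := my_haus_smul α nX n0 kX k0
    -- step 3 : H(X, {0}) ≤ H(P,{0}) + H(Q,{0})
    have step3 : hausdorffDist (P - Q) ({0} : Set ℝ)
        ≤ hausdorffDist P ({0} : Set ℝ) + hausdorffDist Q ({0} : Set ℝ) := by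
      have h00 : ({0} : Set ℝ) + ({0} : Set ℝ) = {0} := by simp
      calc hausdorffDist (P - Q) ({0} : Set ℝ)
          = hausdorffDist (P + (-Q)) (({0} : Set ℝ) + ({0} : Set ℝ)) := by rw [hsub, h00]
        _ ≤ hausdorffDist P ({0} : Set ℝ) + hausdorffDist (-Q) ({0} : Set ℝ) :=
            my_haus_add nP n0 nnQ n0 kP k0 knQ k0
        _ = hausdorffDist P ({0} : Set ℝ) + hausdorffDist Q ({0} : Set ℝ) := by
            rw [my_haus_neg]
    -- step 4 : triangle inequalities
    have finPA : EMetric.hausdorffEdist P (Φ s : Set ℝ) ≠ ⊤ :=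
      hausdorffEdist_ne_top_of_nonempty_of_bounded nP (Φ s).nonempty
        kP.isBounded (Φ s).isCompact.isBounded
    have finQA : EMetric.hausdorffEdist Q (Φ s : Set ℝ) ≠ ⊤ :=
      hausdorffEdist_ne_top_of_nonempty_of_bounded nQ (Φ s).nonempty
        kQ.isBounded (Φ s).isCompact.isBounded
    have step4a : hausdorffDist P ({0} : Set ℝ)
        ≤ hausdorffDist P (Φ s : Set ℝ) + hausdorffDist (Φ s : Set ℝ) ({0} : Set ℝ) :=
      hausdorffDist_triangle finPA
    have step4b : hausdorffDist Q ({0} : Set ℝ)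
        ≤ hausdorffDist Q (Φ s : Set ℝ) + hausdorffDist (Φ s : Set ℝ) ({0} : Set ℝ) :=
      hausdorffDist_triangle finQA
    -- bounds to the suprema
    have hEs : hausdorffDist P (Φ s : Set ℝ) ≤ E := by
      have : dist (Φα s) (Φ s) ≤ E :=
        le_ciSup bE (⟨s, hsI⟩ : ↥(Icc a T))
      rwa [NonemptyCompacts.dist_eq] at this
    have hFs : hausdorffDist Q (Φ s : Set ℝ) ≤ F := by
      have : dist (Φ s) (B s) ≤ F :=
        le_ciSup bF (⟨s, hsI⟩ : ↥(Icc a T))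
      rw [NonemptyCompacts.dist_eq] at this
      rwa [hausdorffDist_comm]
    have hGs : hausdorffDist (Φ s : Set ℝ) ({0} : Set ℝ) ≤ G :=
      le_ciSup bG (⟨s, hsI⟩ : ↥(Icc a T))
    -- combine
    have : dist (Φα t) (Φ t) = hausdorffDist (A + α • (P - Q)) A := by
      rw [NonemptyCompacts.dist_eq, heq]
    rw [this, hK]
    have hαnn : (0 : ℝ) ≤ |α| := abs_nonneg α
    calc hausdorffDist (A + α • (P - Q)) A
        ≤ |α| * hausdorffDist (P - Q) ({0} : Set ℝ) := step1.trans step2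
      _ ≤ |α| * (E + F + 2 * G) := by
          apply mul_le_mul_of_nonneg_left _ hαnn
          linarith
  -- extend to t = T by continuity
  have keyIcc : ∀ t ∈ Icc a T, dist (Φα t) (Φ t) ≤ K := by
    intro t ht
    rcases lt_or_eq_of_le ht.2 with h | h
    · exact key t ⟨ht.1, h⟩
    · subst h
      have hcl : t ∈ closure (Ico a t) := by
        rw [closure_Ico (ne_of_lt haT)]
        exact ⟨le_of_lt haT, le_refl t⟩
      haveI := mem_closure_iff_nhdsWithin_neBot.mp hcl
      have hcw : Tendsto (fun u => dist (Φα u) (Φ u)) (𝓝[Ico a t] t)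
          (𝓝 (dist (Φα t) (Φ t))) :=
        (((hΦα t ht).dist (hΦ t ht)) : Tendsto _ _ _).mono_left
          (nhdsWithin_mono t Ico_subset_Icc_self)
      exact le_of_tendsto hcw (eventually_nhdsWithin_of_forall key)
  have hEK : E ≤ K := ciSup_le fun t => keyIcc t t.2
  -- nonnegativity and final algebra
  have hpos : (0 : ℝ) < 1 - |α| := by linarith
  have hfin : E ≤ (|α| * F + 2 * |α| * G) / (1 - |α|) := by
    rw [le_div_iff₀ hpos]
    rw [hK] at hEK
    nlinarith [hEK]
  have hrhs : (|α| / (1 - |α|)) * F + (2 * |α| / (1 - |α|)) * G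
      = (|α| * F + 2 * |α| * G) / (1 - |α|) := by
    field_simp
  rw [hrhs]
  exact hfin
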